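/- Let K = HahnSeries ℚ ℂ, let A be an m × n matrix over K and b ∈ K^m, all of whose entries have integer support (every exponent in the support of each A_{i,j} and each b_i is an integer). If x ∈ K^n satisfies A.mulVec x = b, then for every c ∈ ℚ the componentwise coset restriction R_c x (defined by (R_c x)_j = R_c (x_j)) satisfies A.mulVec (R_c x) = R_c b componentwise; moreover R_c b = b when c ∈ ℤ and R_c b = 0 when c ∉ ℤ. -/

import Mathlib

open scoped Classical in
/-- The coset restriction `R_c : HahnSeries ℚ ℂ → HahnSeries ℚ ℂ` keeping only the
coefficients at exponents congruent to `c` modulo `ℤ`. -/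
noncomputable def cosetRestrict (c : ℚ) (x : HahnSeries ℚ ℂ) : HahnSeries ℚ ℂ where
  coeff s := if ∃ k : ℤ, s - c = (k : ℚ) then x.coeff s else 0
  isPWO_support' := x.isPWO_support'.mono (by
    intro s hs
    simp only [Function.mem_support, ne_eq] at hs ⊢
    intro h
    apply hs
    split_ifs <;> simp [h])

open scoped Classical in
lemma cosetRestrict_coeff (c : ℚ) (x : HahnSeries ℚ ℂ) (s : ℚ) :
    (cosetRestrict c x).coeff s = if ∃ k : ℤ, s - c = (k : ℚ) then x.coeff s else 0 := rfl

lemma cosetRestrict_support_subset (c : ℚ) (x : HahnSeries ℚ ℂ) :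
    (cosetRestrict c x).support ⊆ x.support := by
  intro s hs
  simp only [HahnSeries.mem_support, cosetRestrict_coeff] at hs ⊢
  intro h
  apply hs
  split_ifs <;> simp [h]

lemma cosetRestrict_add (c : ℚ) (x y : HahnSeries ℚ ℂ) :
    cosetRestrict c (x + y) = cosetRestrict c x + cosetRestrict c y := by
  ext s
  simp only [HahnSeries.coeff_add, cosetRestrict_coeff]
  split_ifs <;> simp

lemma cosetRestrict_zero (c : ℚ) : cosetRestrict c (0 : HahnSeries ℚ ℂ) = 0 := by
  ext s
  simp [cosetRestrict_coeff]

lemma cosetRestrict_sum (c : ℚ) {ι : Type*} (t : Finset ι) (f : ι → HahnSeries ℚ ℂ) :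
    cosetRestrict c (∑ i ∈ t, f i) = ∑ i ∈ t, cosetRestrict c (f i) := by
  classical
  induction t using Finset.induction_on with
  | empty => simp [cosetRestrict_zero]
  | insert _ _ h ih => simp [Finset.sum_insert h, cosetRestrict_add, ih]

lemma cosetRestrict_mul (c : ℚ) (a x : HahnSeries ℚ ℂ)
    (ha : ∀ s ∈ a.support, ∃ k : ℤ, s = (k : ℚ)) :
    a * cosetRestrict c x = cosetRestrict c (a * x) := by
  classical
  ext s
  rw [cosetRestrict_coeff,
    HahnSeries.coeff_mul_right' x.isPWO_support (cosetRestrict_support_subset c x),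
    HahnSeries.coeff_mul]
  by_cases hs : ∃ k : ℤ, s - c = (k : ℚ)
  · rw [if_pos hs]
    apply Finset.sum_congr rfl
    intro ij hij
    rw [Finset.mem_addAntidiagonal] at hij
    obtain ⟨hi, _, hsum⟩ := hij
    obtain ⟨k, hk⟩ := hs
    obtain ⟨l, hl⟩ := ha _ hi
    have : ∃ k' : ℤ, ij.2 - c = (k' : ℚ) := by
      refine ⟨k - l, ?_⟩
      push_cast
      rw [← hk, ← hl, ← hsum]
      ring
    rw [cosetRestrict_coeff, if_pos this]
  · rw [if_neg hs]
    apply Finset.sum_eq_zero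
    intro ij hij
    rw [Finset.mem_addAntidiagonal] at hij
    obtain ⟨hi, _, hsum⟩ := hij
    obtain ⟨l, hl⟩ := ha _ hi
    rw [cosetRestrict_coeff]
    split_ifs with h
    · obtain ⟨k', hk'⟩ := h
      exact absurd ⟨l + k', by push_cast; rw [← hl, ← hk', ← hsum]; ring⟩ hs
    · simp

/-- For a linear system `A.mulVec x = b` over `HahnSeries ℚ ℂ` whose matrix
and right-hand side have integer support, the componentwise coset restriction of any
solution satisfies `A.mulVec (R_c x) = R_c b` for every `c ∈ ℚ`; moreover `R_c b = b`
if `c ∈ ℤ` and `R_c b = 0` if `c ∉ ℤ`. -/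
theorem cosetRestrict_solution (m n : ℕ)
    (A : Matrix (Fin m) (Fin n) (HahnSeries ℚ ℂ)) (b : Fin m → HahnSeries ℚ ℂ)
    (hA : ∀ i j, ∀ s ∈ (A i j).support, ∃ k : ℤ, s = (k : ℚ))
    (hb : ∀ i, ∀ s ∈ (b i).support, ∃ k : ℤ, s = (k : ℚ))
    (x : Fin n → HahnSeries ℚ ℂ) (hx : A.mulVec x = b) :
    ∀ c : ℚ,
      A.mulVec (fun j => cosetRestrict c (x j)) = (fun i => cosetRestrict c (b i)) ∧
      ((∃ k : ℤ, c = (k : ℚ)) → (fun i => cosetRestrict c (b i)) = b) ∧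
      (¬ (∃ k : ℤ, c = (k : ℚ)) → (fun i => cosetRestrict c (b i)) = 0) := by
  classical
  intro c
  refine ⟨?_, ?_, ?_⟩
  · funext i
    have hbi : b i = ∑ j, A i j * x j := by
      rw [← hx]; rfl
    calc A.mulVec (fun j => cosetRestrict c (x j)) i
        = ∑ j, A i j * cosetRestrict c (x j) := rfl
      _ = ∑ j, cosetRestrict c (A i j * x j) := by
          exact Finset.sum_congr rfl fun j _ => cosetRestrict_mul c _ _ (hA i j)
      _ = cosetRestrict c (∑ j, A i j * x j) := (cosetRestrict_sum c _ _).symm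
      _ = cosetRestrict c (b i) := by rw [← hbi]
  · rintro ⟨k, hk⟩
    funext i
    ext s
    rw [cosetRestrict_coeff]
    split_ifs with h
    · rfl
    · by_contra hne
      have hs : (b i).coeff s ≠ 0 := fun h0 => hne h0.symm
      obtain ⟨l, hl⟩ := hb i s hs
      exact h ⟨l - k, by push_cast; rw [← hl, ← hk]⟩
  · intro hc
    funext i
    ext s
    rw [cosetRestrict_coeff]
    simp only [Pi.zero_apply, HahnSeries.coeff_zero]
    split_ifs with h
    · obtain ⟨k', hk'⟩ := h
      by_contra hne
      obtain ⟨l, hl⟩ := hb i s hne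
      exact hc ⟨l - k', by push_cast; rw [← hl, ← hk']; ring⟩
    · rfl
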